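/- Let E and E' be finite-dimensional real inner product spaces of the same dimension, A : E → E' a linear isomorphism, U, V complementary subspaces of E (U ∩ V = {0}, U + V = E), and U' = A(U), V' = A(V) (which are complementary in E'). Denote by |det A| the absolute value of the determinant of the matrix of A with respect to orthonormal bases of E and E', by |det(A|_U)| the absolute value of the determinant of the matrix of the restriction A|_U : U → U' with respect to orthonormal bases of U and U', and similarly |det(A|_V)| for A|_V : V → V'. Then |det A| · α(U,V) = α(U',V') · |det(A|_U)| · |det(A|_V)|, where α denotes the angle function. -/

import Mathlib

open Matrix

theorem abs_det_mul_angle_eq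
    {E E' : Type*} [NormedAddCommGroup E] [InnerProductSpace ℝ E] [FiniteDimensional ℝ E]
    [NormedAddCommGroup E'] [InnerProductSpace ℝ E'] [FiniteDimensional ℝ E']
    (A : E ≃ₗ[ℝ] E') (U V : Submodule ℝ E) (hUV : IsCompl U V)
    {k m : ℕ}
    (bE : OrthonormalBasis (Fin (k + m)) ℝ E)
    (bE' : OrthonormalBasis (Fin (k + m)) ℝ E')
    (bU : OrthonormalBasis (Fin k) ℝ U) (bV : OrthonormalBasis (Fin m) ℝ V)
    (bU' : OrthonormalBasis (Fin k) ℝ (U.map (A : E →ₗ[ℝ] E')))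
    (bV' : OrthonormalBasis (Fin m) ℝ (V.map (A : E →ₗ[ℝ] E'))) :
    |(LinearMap.toMatrix bE.toBasis bE'.toBasis (A : E →ₗ[ℝ] E')).det| *
      |bE.toBasis.det (Fin.append (fun i => (bU i : E)) (fun j => (bV j : E)))| =
    |bE'.toBasis.det (Fin.append (fun i => (bU' i : E')) (fun j => (bV' j : E')))| *
      |(LinearMap.toMatrix bU.toBasis bU'.toBasis
          ((A : E →ₗ[ℝ] E').restrict
            (fun x hx => Submodule.mem_map_of_mem (f := (A : E →ₗ[ℝ] E')) hx))).det| *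
      |(LinearMap.toMatrix bV.toBasis bV'.toBasis
          ((A : E →ₗ[ℝ] E').restrict
            (fun x hx => Submodule.mem_map_of_mem (f := (A : E →ₗ[ℝ] E')) hx))).det| := by
  classical
  set w : Fin (k + m) → E := Fin.append (fun i => (bU i : E)) (fun j => (bV j : E)) with hw
  set w' : Fin (k + m) → E' :=
    Fin.append (fun i => (bU' i : E')) (fun j => (bV' j : E')) with hw'
  set MU : Matrix (Fin k) (Fin k) ℝ :=
    LinearMap.toMatrix bU.toBasis bU'.toBasis
      ((A : E →ₗ[ℝ] E').restrict (fun x hx => Submodule.mem_map_of_mem (f := (A : E →ₗ[ℝ] E')) hx)) with hMU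
  set MV : Matrix (Fin m) (Fin m) ℝ :=
    LinearMap.toMatrix bV.toBasis bV'.toBasis
      ((A : E →ₗ[ℝ] E').restrict (fun x hx => Submodule.mem_map_of_mem (f := (A : E →ₗ[ℝ] E')) hx)) with hMV
  set M : Matrix (Fin (k + m)) (Fin (k + m)) ℝ :=
    LinearMap.toMatrix bE.toBasis bE'.toBasis (A : E →ₗ[ℝ] E') with hM
  set B : Matrix (Fin (k + m)) (Fin (k + m)) ℝ :=
    (Matrix.fromBlocks MU 0 0 MV).submatrix finSumFinEquiv.symm finSumFinEquiv.symm with hB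
  have key1 : bE'.toBasis.toMatrix ((A : E →ₗ[ℝ] E') ∘ w) = M * bE.toBasis.toMatrix w := by
    ext j i
    have h := congrFun (LinearMap.toMatrix_mulVec_repr bE.toBasis bE'.toBasis (A : E →ₗ[ℝ] E') (w i)) j
    rw [Matrix.mul_apply, Module.Basis.toMatrix_apply, Function.comp_apply, ← h, Matrix.mulVec,
      dotProduct]
    simp [Module.Basis.toMatrix_apply]
    rfl
  have hAU : ∀ i₀ : Fin k, (A : E →ₗ[ℝ] E') (bU i₀ : E) = ∑ p : Fin k, MU p i₀ • (bU' p : E') := by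
    intro i₀
    have h1 : ((A : E →ₗ[ℝ] E').restrict (fun x hx => Submodule.mem_map_of_mem (f := (A : E →ₗ[ℝ] E')) hx)) (bU i₀)
        = ∑ p : Fin k, MU p i₀ • bU' p := by
      conv_lhs => rw [← bU'.toBasis.sum_repr
        (((A : E →ₗ[ℝ] E').restrict (fun x hx => Submodule.mem_map_of_mem (f := (A : E →ₗ[ℝ] E')) hx)) (bU i₀))]
      refine Finset.sum_congr rfl fun p _ => ?_
      rw [hMU]
      rw [LinearMap.toMatrix_apply]
      simp
    have := congrArg (Submodule.subtype _) h1
    simpa using this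
  have hAV : ∀ j₀ : Fin m, (A : E →ₗ[ℝ] E') (bV j₀ : E) = ∑ p : Fin m, MV p j₀ • (bV' p : E') := by
    intro j₀
    have h1 : ((A : E →ₗ[ℝ] E').restrict (fun x hx => Submodule.mem_map_of_mem (f := (A : E →ₗ[ℝ] E')) hx)) (bV j₀)
        = ∑ p : Fin m, MV p j₀ • bV' p := by
      conv_lhs => rw [← bV'.toBasis.sum_repr
        (((A : E →ₗ[ℝ] E').restrict (fun x hx => Submodule.mem_map_of_mem (f := (A : E →ₗ[ℝ] E')) hx)) (bV j₀))]
      refine Finset.sum_congr rfl fun p _ => ?_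
      rw [hMV, LinearMap.toMatrix_apply]
      simp
    have := congrArg (Submodule.subtype _) h1
    simpa using this
  have key2 : bE'.toBasis.toMatrix ((A : E →ₗ[ℝ] E') ∘ w) = bE'.toBasis.toMatrix w' * B := by
    ext j i
    rw [Matrix.mul_apply, Module.Basis.toMatrix_apply, Function.comp_apply]
    refine Fin.addCases (fun i₀ => ?_) (fun i₀ => ?_) i
    · rw [hw, Fin.append_left, hAU i₀, map_sum]
      rw [Fin.sum_univ_add]
      simp only [Module.Basis.toMatrix_apply, hB, Matrix.submatrix_apply, finSumFinEquiv_symm_apply_castAdd,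
        finSumFinEquiv_symm_apply_natAdd, Matrix.fromBlocks_apply₁₁, Matrix.fromBlocks_apply₂₁,
        Matrix.zero_apply, mul_zero, Finset.sum_const_zero, add_zero, hw', Fin.append_left,
        _root_.map_smul, Finsupp.coe_smul, Pi.smul_apply, smul_eq_mul]
      simp [Finsupp.finset_sum_apply, mul_comm]
    · rw [hw, Fin.append_right, hAV i₀, map_sum]
      rw [Fin.sum_univ_add]
      simp only [Module.Basis.toMatrix_apply, hB, Matrix.submatrix_apply, finSumFinEquiv_symm_apply_castAdd,
        finSumFinEquiv_symm_apply_natAdd, Matrix.fromBlocks_apply₁₂, Matrix.fromBlocks_apply₂₂,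
        Matrix.zero_apply, mul_zero, Finset.sum_const_zero, zero_add, hw', Fin.append_right,
        _root_.map_smul, Finsupp.coe_smul, Pi.smul_apply, smul_eq_mul]
      simp [Finsupp.finset_sum_apply, mul_comm]
  have hdet : M.det * (bE.toBasis.toMatrix w).det
      = (bE'.toBasis.toMatrix w').det * (MU.det * MV.det) := by
    have := congrArg Matrix.det key1
    rw [Matrix.det_mul] at this
    have h2 := congrArg Matrix.det key2
    rw [Matrix.det_mul, hB, Matrix.det_submatrix_equiv_self, Matrix.det_fromBlocks_zero₂₁] at h2
    rw [← this, h2]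
  rw [Module.Basis.det_apply, Module.Basis.det_apply]
  rw [← abs_mul, hdet, abs_mul, abs_mul, mul_assoc]
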